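/- Suppose 𝒟 = 𝒵 = {0, 1, 2} and the latent distribution Q satisfies: (i) Q{D_0 = 1 and D_1 ≠ 1} = 0; (ii) Q{D_0 = 2 and D_2 ≠ 2} = 0; (iii) Q{D_0 ≠ 1 and D_1 ≠ 1 and 1{D_1 = 2} ≠ 1{D_0 = 2}} = 0; (iv) Q{D_0 ≠ 2 and D_2 ≠ 2 and 1{D_2 = 1} ≠ 1{D_0 = 1}} = 0. Then for each d ∈ {0, 1, 2}, Q{D_d ≠ d and D_{z'} = d for some z' ≠ d} = 0; that is, Q satisfies generalized monotonicity with z*(d) = d for every d. -/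

import Mathlib

open Finset

/-- A probability mass function on a finite type. -/
structure ProbMass (α : Type) [Fintype α] where
  mass : α → ℝ
  nonneg : ∀ a, 0 ≤ mass a
  total : ∑ a, mass a = 1

/-- Probability of an event under a probability mass function. -/
noncomputable def pr {α : Type} [Fintype α] (Q : ProbMass α) (A : Set α) : ℝ :=
  ∑ a, A.indicator Q.mass a

/-- Expectation of a real-valued function under a probability mass function. -/
noncomputable def expect {α : Type} [Fintype α] (Q : ProbMass α) (f : α → ℝ) : ℝ :=
  ∑ a, Q.mass a * f a

/-- The latent space: potential outcomes `(Y_d)_{d ∈ D}` taking values in the finite set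
`𝒴 ⊂ ℝ`, potential treatments `(D_z)_{z ∈ Z}`, and the instrument `Z`. -/
abbrev Latent (𝒴 : Finset ℝ) (D Z : Type) : Type := (D → ↥𝒴) × (Z → D) × Z

/-- The observed space: `(Y, D, Z)`. -/
abbrev Obs (𝒴 : Finset ℝ) (D Z : Type) : Type := ↥𝒴 × D × Z

variable {𝒴 : Finset ℝ} {D Z : Type} [Fintype D] [DecidableEq D] [Fintype Z] [DecidableEq Z]

/-- The map `T` sending `((y_d), (d_z), z)` to `(y_{d_z}, d_z, z)`. -/
def Tmap (ω : Latent 𝒴 D Z) : Obs 𝒴 D Z := (ω.1 (ω.2.1 ω.2.2), ω.2.1 ω.2.2, ω.2.2)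

/-- `Q` rationalizes `P`: `P = Q ∘ T⁻¹`. -/
def Rationalizes (Q : ProbMass (Latent 𝒴 D Z)) (P : ProbMass (Obs 𝒴 D Z)) : Prop :=
  ∀ o : Obs 𝒴 D Z, P.mass o = pr Q {ω | Tmap ω = o}

/-- Instrument exogeneity: `((Y_d), (D_z))` is independent of `Z` under `Q`. -/
def Exog (Q : ProbMass (Latent 𝒴 D Z)) : Prop :=
  ∀ (yd : D → ↥𝒴) (dz : Z → D) (z : Z),
    pr Q {ω | ω.1 = yd ∧ ω.2.1 = dz ∧ ω.2.2 = z}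
      = pr Q {ω | ω.1 = yd ∧ ω.2.1 = dz} * pr Q {ω | ω.2.2 = z}

/-- `zs` maximally encourages treatment `d` under `Q`:
`Q{D_{zs} ≠ d and D_{z'} = d for some z'} = 0`. -/
def MaxEnc (Q : ProbMass (Latent 𝒴 D Z)) (d : D) (zs : Z) : Prop :=
  pr Q {ω | ω.2.1 zs ≠ d ∧ ∃ z' : Z, ω.2.1 z' = d} = 0

/-- Generalized monotonicity. -/
def GenMono (Q : ProbMass (Latent 𝒴 D Z)) : Prop :=
  ∀ d : D, ∃ zs : Z, MaxEnc Q d zs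

/-- `θ(Q) = (E_Q[Y_d])_{d ∈ D}`, the vector of average potential outcomes. -/
noncomputable def theta (Q : ProbMass (Latent 𝒴 D Z)) : D → ℝ :=
  fun d => expect Q fun ω => (ω.1 d : ℝ)

/-- `𝐐₀(P, 𝐐)`: the set of `Q ∈ 𝐐` that rationalize `P`. -/
def Q0 (P : ProbMass (Obs 𝒴 D Z)) (QQ : Set (ProbMass (Latent 𝒴 D Z))) :
    Set (ProbMass (Latent 𝒴 D Z)) :=
  {Q | Q ∈ QQ ∧ Rationalizes Q P}

/-- `Θ₀(P, 𝐐)`: the identified set for `θ(Q)`. -/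
noncomputable def Theta0 (P : ProbMass (Obs 𝒴 D Z))
    (QQ : Set (ProbMass (Latent 𝒴 D Z))) : Set (D → ℝ) :=
  theta '' Q0 P QQ

/-- Unrestricted potential outcomes: if `Q ∈ 𝐐`, `Q'` is exogenous, and the potential
treatments have the same distribution under `Q'` as under `Q`, then `Q' ∈ 𝐐`. -/
def UnrestrictedPO (QQ : Set (ProbMass (Latent 𝒴 D Z))) : Prop :=
  ∀ Q ∈ QQ, ∀ Q' : ProbMass (Latent 𝒴 D Z), Exog Q' →
    (∀ dz : Z → D, pr Q' {ω | ω.2.1 = dz} = pr Q {ω | ω.2.1 = dz}) → Q' ∈ QQ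

/-- `P{Z = z}`. -/
noncomputable def prZ (P : ProbMass (Obs 𝒴 D Z)) (z : Z) : ℝ :=
  pr P {o | o.2.2 = z}

/-- `P{D = d ∣ Z = z}`. -/
noncomputable def condD (P : ProbMass (Obs 𝒴 D Z)) (d : D) (z : Z) : ℝ :=
  pr P {o | o.2.1 = d ∧ o.2.2 = z} / prZ P z

/-- `p_{yd|z} = P{Y = y, D = d ∣ Z = z}`. -/
noncomputable def pObs (P : ProbMass (Obs 𝒴 D Z)) (y : ℝ) (d : D) (z : Z) : ℝ :=
  pr P {o | (o.1 : ℝ) = y ∧ o.2.1 = d ∧ o.2.2 = z} / prZ P z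

/-- `β_{d|z} = E_P[Y · 1{D = d} ∣ Z = z]`. -/
noncomputable def betaObs (P : ProbMass (Obs 𝒴 D Z)) (d : D) (z : Z) : ℝ :=
  (expect P fun o => if o.2.1 = d ∧ o.2.2 = z then (o.1 : ℝ) else 0) / prZ P z


lemma pr_nonneg {α : Type} [Fintype α] (Q : ProbMass α) (A : Set α) : 0 ≤ pr Q A :=
  Finset.sum_nonneg fun a _ => Set.indicator_nonneg (fun a _ => Q.nonneg a) a

lemma pr_mono {α : Type} [Fintype α] (Q : ProbMass α) {A B : Set α} (h : A ⊆ B) :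
    pr Q A ≤ pr Q B :=
  Finset.sum_le_sum fun a _ =>
    Set.indicator_le_indicator_of_subset h (fun a => Q.nonneg a) a

lemma pr_union_le {α : Type} [Fintype α] (Q : ProbMass α) (A B : Set α) :
    pr Q (A ∪ B) ≤ pr Q A + pr Q B := by
  unfold pr
  rw [← Finset.sum_add_distrib]
  refine Finset.sum_le_sum fun a _ => ?_
  by_cases hA : a ∈ A
  · rw [Set.indicator_of_mem (Set.mem_union_left _ hA), Set.indicator_of_mem hA]
    exact le_add_of_nonneg_right (Set.indicator_nonneg (fun a _ => Q.nonneg a) a)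
  · by_cases hB : a ∈ B
    · rw [Set.indicator_of_mem (Set.mem_union_right _ hB), Set.indicator_of_mem hB,
        Set.indicator_of_notMem hA, zero_add]
    · rw [Set.indicator_of_notMem hA, Set.indicator_of_notMem hB,
        Set.indicator_of_notMem (by simp [hA, hB]), add_zero]

/-- Kirkeboen–Leuven–Mogstad, Example C.3: with `𝒟 = 𝒵 = {0,1,2}`, the
monotonicity restrictions (i)–(ii) and the irrelevance restrictions (iii)–(iv) imply
generalized monotonicity with `z*(d) = d` for every `d`. -/
theorem klm_genMono
    (𝒴 : Finset ℝ) (h𝒴 : 2 ≤ 𝒴.card)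
    (Q : ProbMass (Latent 𝒴 (Fin 3) (Fin 3)))
    (h1 : pr Q {ω | ω.2.1 0 = 1 ∧ ω.2.1 1 ≠ 1} = 0)
    (h2 : pr Q {ω | ω.2.1 0 = 2 ∧ ω.2.1 2 ≠ 2} = 0)
    (h3 : pr Q {ω | ω.2.1 0 ≠ 1 ∧ ω.2.1 1 ≠ 1 ∧ ¬ ((ω.2.1 1 = 2) ↔ (ω.2.1 0 = 2))} = 0)
    (h4 : pr Q {ω | ω.2.1 0 ≠ 2 ∧ ω.2.1 2 ≠ 2 ∧ ¬ ((ω.2.1 2 = 1) ↔ (ω.2.1 0 = 1))} = 0) :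
    ∀ d : Fin 3, pr Q {ω | ω.2.1 d ≠ d ∧ ∃ z' : Fin 3, z' ≠ d ∧ ω.2.1 z' = d} = 0 := by
  intro d
  set A1 : Set (Latent 𝒴 (Fin 3) (Fin 3)) := {ω | ω.2.1 0 = 1 ∧ ω.2.1 1 ≠ 1} with hA1
  set A2 : Set (Latent 𝒴 (Fin 3) (Fin 3)) := {ω | ω.2.1 0 = 2 ∧ ω.2.1 2 ≠ 2} with hA2
  set A3 : Set (Latent 𝒴 (Fin 3) (Fin 3)) :=
    {ω | ω.2.1 0 ≠ 1 ∧ ω.2.1 1 ≠ 1 ∧ ¬ ((ω.2.1 1 = 2) ↔ (ω.2.1 0 = 2))} with hA3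
  set A4 : Set (Latent 𝒴 (Fin 3) (Fin 3)) :=
    {ω | ω.2.1 0 ≠ 2 ∧ ω.2.1 2 ≠ 2 ∧ ¬ ((ω.2.1 2 = 1) ↔ (ω.2.1 0 = 1))} with hA4
  have hsub : {ω : Latent 𝒴 (Fin 3) (Fin 3) | ω.2.1 d ≠ d ∧ ∃ z' : Fin 3, z' ≠ d ∧ ω.2.1 z' = d}
      ⊆ A1 ∪ A2 ∪ A3 ∪ A4 := by
    intro ω hω
    obtain ⟨hne, z', hz', hz⟩ := hω
    have main : ∀ a b c dd zz : Fin 3,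
        (if dd = 0 then a else if dd = 1 then b else c) ≠ dd →
        zz ≠ dd →
        (if zz = 0 then a else if zz = 1 then b else c) = dd →
        ((a = 1 ∧ b ≠ 1) ∨ (a = 2 ∧ c ≠ 2) ∨
         (a ≠ 1 ∧ b ≠ 1 ∧ ¬ ((b = 2) ↔ (a = 2))) ∨
         (a ≠ 2 ∧ c ≠ 2 ∧ ¬ ((c = 1) ↔ (a = 1)))) := by decide
    have hd : (if d = 0 then ω.2.1 0 else if d = 1 then ω.2.1 1 else ω.2.1 2) = ω.2.1 d := by
      fin_cases d <;> simp
    have hz'' : (if z' = 0 then ω.2.1 0 else if z' = 1 then ω.2.1 1 else ω.2.1 2) = ω.2.1 z' := by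
      fin_cases z' <;> simp
    have := main (ω.2.1 0) (ω.2.1 1) (ω.2.1 2) d z' (hd ▸ hne) hz' (hz'' ▸ hz)
    rcases this with h | h | h | h
    · exact Or.inl (Or.inl (Or.inl h))
    · exact Or.inl (Or.inl (Or.inr h))
    · exact Or.inl (Or.inr h)
    · exact Or.inr h
  have hb : pr Q (A1 ∪ A2 ∪ A3 ∪ A4) ≤ 0 := by
    calc pr Q (A1 ∪ A2 ∪ A3 ∪ A4) ≤ pr Q (A1 ∪ A2 ∪ A3) + pr Q A4 := pr_union_le Q _ _
    _ ≤ (pr Q (A1 ∪ A2) + pr Q A3) + pr Q A4 :=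
        add_le_add_left (pr_union_le Q _ _) _
    _ ≤ ((pr Q A1 + pr Q A2) + pr Q A3) + pr Q A4 :=
        add_le_add_left (add_le_add_left (pr_union_le Q _ _) _) _
    _ = 0 := by rw [h1, h2, h3, h4]; ring
  exact le_antisymm (le_trans (pr_mono Q hsub) hb) (pr_nonneg Q _)
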